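/- For image-finite MTSs, if every Boudol-Larsen modal formula satisfied by p is also satisfied by q, then p ⊑ q. -/

import Mathlib

/-- A labelled transition system over actions `A` with states `S`. -/
abbrev LTS (A S : Type) := S → A → S → Prop

/-- A modal transition system over actions `A` with states `S`. -/
structure MTS (A S : Type) where
  may : S → A → S → Prop
  must : S → A → S → Prop
  must_may : ∀ {s a s'}, must s a s' → may s a s'

/-- `R` is a (modal) refinement relation between MTSs `M` and `N`. -/
def IsRefinement {A S T : Type} (M : MTS A S) (N : MTS A T) (R : S → T → Prop) : Prop :=
  ∀ ⦃p q⦄, R p q →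
    ((∀ a p', M.must p a p' → ∃ q', N.must q a q' ∧ R p' q') ∧
     (∀ a q', N.may q a q' → ∃ p', M.may p a p' ∧ R p' q'))

/-- Modal refinement preorder: `p ⊑ q`. -/
def Refines {A S T : Type} (M : MTS A S) (p : S) (N : MTS A T) (q : T) : Prop :=
  ∃ R, IsRefinement M N R ∧ R p q

/-- The universal (loosest) MTS `U` with single state `u` and may self-loops for all actions. -/
def UnivMTS (A : Type) : MTS A Unit :=
  ⟨fun _ _ _ => True, fun _ _ _ => False, fun h => h.elim⟩

/-- `R` is a covariant-contravariant simulation w.r.t. signature `(Ar, Al, Abi)`. -/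
def IsCCSim {A S T : Type} (Ar Al Abi : Set A) (P : LTS A S) (Q : LTS A T)
    (R : S → T → Prop) : Prop :=
  ∀ ⦃p q⦄, R p q →
    ((∀ a ∈ Ar ∪ Abi, ∀ p', P p a p' → ∃ q', Q q a q' ∧ R p' q') ∧
     (∀ a ∈ Al ∪ Abi, ∀ q', Q q a q' → ∃ p', P p a p' ∧ R p' q'))

/-- The covariant-contravariant simulation preorder `p ≲cc q`. -/
def CCpre {A S T : Type} (Ar Al Abi : Set A) (P : LTS A S) (Q : LTS A T)
    (p : S) (q : T) : Prop :=
  ∃ R, IsCCSim Ar Al Abi P Q R ∧ R p q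

/-- Boudol-Larsen modal formulae (the same syntax also serves for
covariant-contravariant modal logic). -/
inductive BL (A : Type) : Type
  | bot : BL A
  | top : BL A
  | and (φ ψ : BL A) : BL A
  | or (φ ψ : BL A) : BL A
  | box (a : A) (φ : BL A) : BL A
  | dia (a : A) (φ : BL A) : BL A

/-- Boudol-Larsen satisfaction over an MTS: `[a]` over may transitions,
`⟨a⟩` over must transitions. -/
def satMTS {A S : Type} (M : MTS A S) : S → BL A → Prop
  | _, .bot => False
  | _, .top => True
  | p, .and φ ψ => satMTS M p φ ∧ satMTS M p ψ
  | p, .or φ ψ => satMTS M p φ ∨ satMTS M p ψ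
  | p, .box a φ => ∀ p', M.may p a p' → satMTS M p' φ
  | p, .dia a φ => ∃ p', M.must p a p' ∧ satMTS M p' φ

/-- Satisfaction of modal formulae over an ordinary LTS. -/
def satLTS {A S : Type} (P : LTS A S) : S → BL A → Prop
  | _, .bot => False
  | _, .top => True
  | p, .and φ ψ => satLTS P p φ ∧ satLTS P p ψ
  | p, .or φ ψ => satLTS P p φ ∨ satLTS P p ψ
  | p, .box a φ => ∀ p', P p a p' → satLTS P p' φ
  | p, .dia a φ => ∃ p', P p a p' ∧ satLTS P p' φ

/-- Well-formed covariant-contravariant modal formulae: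
`⟨a⟩` only for `a ∈ Ar ∪ Abi` and `[b]` only for `b ∈ Al ∪ Abi`. -/
def CCForm {A : Type} (Ar Al Abi : Set A) : BL A → Prop
  | .bot => True
  | .top => True
  | .and φ ψ => CCForm Ar Al Abi φ ∧ CCForm Ar Al Abi ψ
  | .or φ ψ => CCForm Ar Al Abi φ ∧ CCForm Ar Al Abi ψ
  | .box a φ => a ∈ Al ∪ Abi ∧ CCForm Ar Al Abi φ
  | .dia a φ => a ∈ Ar ∪ Abi ∧ CCForm Ar Al Abi φ

/-- A formula is existential if it contains no `[a]`-operators. -/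
def Existential {A : Type} : BL A → Prop
  | .bot => True
  | .top => True
  | .and φ ψ => Existential φ ∧ Existential ψ
  | .or φ ψ => Existential φ ∧ Existential ψ
  | .box _ _ => False
  | .dia _ φ => Existential φ

/-- The translation `M` from covariant-contravariant LTSs to MTSs:
states are `Option S` with `none` playing the role of the fresh universal state `u`. -/
def MM {A S : Type} (Ar Abi : Set A) (P : LTS A S) : MTS A (Option S) where
  may s a s' :=
    match s, s' with
    | some p, some p' => P p a p'
    | some _, none => a ∈ Ar
    | none, none => True
    | none, some _ => False
  must s a s' :=
    match s, s' with
    | some p, some p' => P p a p' ∧ a ∈ Ar ∪ Abi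
    | _, _ => False
  must_may := by
    intro s a s' h
    match s, s' with
    | some p, some p' => exact h.1
    | some p, none => exact h.elim
    | none, some p' => exact h.elim
    | none, none => trivial

/-- `M(R) = R ∪ {(u, q) | q a state of M(Q)}`. -/
def MR {S T : Type} (R : S → T → Prop) : Option S → Option T → Prop
  | some p, some q => R p q
  | none, _ => True
  | some _, none => False

open Classical in
/-- The translation `MC` on Boudol-Larsen formulae. -/
noncomputable def MC {A : Type} (Ar Al Abi : Set A) : BL A → BL A
  | .bot => .bot
  | .top => .top
  | .and φ ψ => .and (MC Ar Al Abi φ) (MC Ar Al Abi ψ)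
  | .or φ ψ => .or (MC Ar Al Abi φ) (MC Ar Al Abi ψ)
  | .dia a φ => if a ∈ Ar ∪ Abi then .dia a (MC Ar Al Abi φ) else .bot
  | .box a φ => if a ∈ Al ∪ Abi then .box a (MC Ar Al Abi φ) else .top

/-- The translation `C` from MTSs to LTSs: actions `A ⊕ A`, where
`Sum.inl a` plays the role of `cv(a)` and `Sum.inr a` of `ct(a)`. -/
def CT {A S : Type} (M : MTS A S) : LTS (A ⊕ A) S :=
  fun p x p' =>
    match x with
    | .inl a => M.must p a p'
    | .inr a => M.may p a p'

/-- The translation `C` on Boudol-Larsen formulae. -/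
def CF {A : Type} : BL A → BL (A ⊕ A)
  | .bot => .bot
  | .top => .top
  | .and φ ψ => .and (CF φ) (CF ψ)
  | .or φ ψ => .or (CF φ) (CF ψ)
  | .dia a φ => .dia (.inl a) (CF φ)
  | .box a φ => .box (.inr a) (CF φ)

/-- The renaming `ρ` (mapping both `cv(a)` and `ct(a)` to `a`) applied to an LTS. -/
def rhoLTS {A S : Type} (P : LTS (A ⊕ A) S) : LTS A S :=
  fun p a p' => P p (.inl a) p' ∨ P p (.inr a) p'

/-- The renaming `ρ` applied to an MTS. -/
def rhoMTS {A S : Type} (M : MTS (A ⊕ A) S) : MTS A S where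
  may p a p' := M.may p (.inl a) p' ∨ M.may p (.inr a) p'
  must p a p' := M.must p (.inl a) p' ∨ M.must p (.inr a) p'
  must_may h := h.imp M.must_may M.must_may

/-- Image finiteness for MTSs. -/
def MTSImageFinite {A S : Type} (M : MTS A S) : Prop :=
  ∀ p a, {p' | M.may p a p'}.Finite

/-- Image finiteness for LTSs. -/
def LTSImageFinite {A S : Type} (P : LTS A S) : Prop :=
  ∀ p a, {p' | P p a p'}.Finite

/-- `R` is a partial bisimulation with bisimulation set `B`. -/
def IsPB {A S T : Type} (B : Set A) (P : LTS A S) (Q : LTS A T) (R : S → T → Prop) : Prop :=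
  ∀ ⦃p q⦄, R p q →
    ((∀ a p', P p a p' → ∃ q', Q q a q' ∧ R p' q') ∧
     (∀ b ∈ B, ∀ q', Q q b q' → ∃ p', P p b p' ∧ R p' q'))

/-- The partial bisimulation preorder `p ≲_B q`. -/
def PBpre {A S T : Type} (B : Set A) (P : LTS A S) (Q : LTS A T) (p : S) (q : T) : Prop :=
  ∃ R, IsPB B P Q R ∧ R p q

/-- `R` is an ordinary simulation. -/
def IsSim {A S T : Type} (P : LTS A S) (Q : LTS A T) (R : S → T → Prop) : Prop :=
  ∀ ⦃p q⦄, R p q → ∀ a p', P p a p' → ∃ q', Q q a q' ∧ R p' q'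

/-- The ordinary simulation preorder. -/
def SimPre {A S T : Type} (P : LTS A S) (Q : LTS A T) (p : S) (q : T) : Prop :=
  ∃ R, IsSim P Q R ∧ R p q

/-- BCCS-like process terms with nondeterministic choice. -/
inductive Proc (A : Type) : Type
  | zero : Proc A
  | act (a : A) (p : Proc A) : Proc A
  | plus (p q : Proc A) : Proc A

/-- The transition relation of process terms. -/
inductive PTr {A : Type} : Proc A → A → Proc A → Prop
  | act (a : A) (p : Proc A) : PTr (.act a p) a p
  | plusL {p a p'} (q : Proc A) : PTr p a p' → PTr (.plus p q) a p'
  | plusR (p : Proc A) {q a q'} : PTr q a q' → PTr (.plus p q) a q'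

/-- Finite conjunction of a list of formulae. -/
def conjL {A : Type} (l : List (BL A)) : BL A := l.foldr .and .top

/-- Finite disjunction of a list of formulae. -/
def disjL {A : Type} (l : List (BL A)) : BL A := l.foldr .or .bot

lemma satMTS_conjL {A S : Type} (M : MTS A S) (s : S) (l : List (BL A)) :
    satMTS M s (conjL l) ↔ ∀ φ ∈ l, satMTS M s φ := by
  induction l with
  | nil => simp [conjL, satMTS]
  | cons a l ih =>
    show satMTS M s a ∧ satMTS M s (conjL l) ↔ _
    rw [ih]
    constructor
    · rintro ⟨h1, h2⟩ φ hφ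
      rcases List.mem_cons.1 hφ with rfl | hm
      · exact h1
      · exact h2 _ hm
    · intro hh
      exact ⟨hh _ (List.mem_cons_self), fun φ hm => hh _ (List.mem_cons_of_mem _ hm)⟩

lemma satMTS_disjL {A S : Type} (M : MTS A S) (s : S) (l : List (BL A)) :
    satMTS M s (disjL l) ↔ ∃ φ ∈ l, satMTS M s φ := by
  induction l with
  | nil => simp [disjL, satMTS]
  | cons a l ih =>
    show satMTS M s a ∨ satMTS M s (disjL l) ↔ _
    rw [ih]
    constructor
    · rintro (h1 | ⟨φ, hm, hφ⟩)
      · exact ⟨a, List.mem_cons_self, h1⟩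
      · exact ⟨φ, List.mem_cons_of_mem _ hm, hφ⟩
    · rintro ⟨φ, hm, hφ⟩
      rcases List.mem_cons.1 hm with rfl | hm
      · exact Or.inl hφ
      · exact Or.inr ⟨φ, hm, hφ⟩

/-- for image-finite MTSs, inclusion of Boudol-Larsen theories implies refinement. -/
theorem BL_inclusion_implies_refines (A S T : Type) (M : MTS A S) (N : MTS A T)
    (hM : MTSImageFinite M) (hN : MTSImageFinite N) (p : S) (q : T)
    (h : ∀ φ : BL A, satMTS M p φ → satMTS N q φ) :
    Refines M p N q := by
  classical
  refine ⟨fun p q => ∀ φ, satMTS M p φ → satMTS N q φ, ?_, h⟩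
  rintro p q hR
  constructor
  · -- must direction
    intro a p' hmust
    by_contra hc
    push_neg at hc
    -- for each must-successor q' of q, pick a distinguishing formula
    have hFin : {q' | N.must q a q'}.Finite :=
      (hN q a).subset (fun q' hq' => N.must_may hq')
    have hch : ∀ q' : T, ∃ φ : BL A, N.must q a q' →
        satMTS M p' φ ∧ ¬ satMTS N q' φ := by
      intro q'
      by_cases hq : N.must q a q'
      · have := hc q' hq
        obtain ⟨φ, h1, h2⟩ := this
        exact ⟨φ, fun _ => ⟨h1, h2⟩⟩
      · exact ⟨.top, fun hh => absurd hh hq⟩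
    choose f hf using hch
    set l : List (BL A) := (hFin.toFinset.toList).map f with hl
    have hsat : satMTS M p (.dia a (conjL l)) := by
      refine ⟨p', hmust, ?_⟩
      rw [satMTS_conjL]
      intro φ hφ
      simp only [hl, List.mem_map, Finset.mem_toList, Set.Finite.mem_toFinset,
        Set.mem_setOf_eq] at hφ
      obtain ⟨q', hq', rfl⟩ := hφ
      exact (hf q' hq').1
    have := hR _ hsat
    obtain ⟨q', hq', hsq⟩ := this
    rw [satMTS_conjL] at hsq
    have hmem : f q' ∈ l := by
      simp only [hl, List.mem_map, Finset.mem_toList, Set.Finite.mem_toFinset,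
        Set.mem_setOf_eq]
      exact ⟨q', hq', rfl⟩
    exact (hf q' hq').2 (hsq _ hmem)
  · -- may direction
    intro a q' hmay
    by_contra hc
    push_neg at hc
    have hFin : {p' | M.may p a p'}.Finite := hM p a
    have hch : ∀ p' : S, ∃ φ : BL A, M.may p a p' →
        satMTS M p' φ ∧ ¬ satMTS N q' φ := by
      intro p'
      by_cases hp : M.may p a p'
      · have := hc p' hp
        obtain ⟨φ, h1, h2⟩ := this
        exact ⟨φ, fun _ => ⟨h1, h2⟩⟩
      · exact ⟨.top, fun hh => absurd hh hp⟩
    choose f hf using hch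
    set l : List (BL A) := (hFin.toFinset.toList).map f with hl
    have hsat : satMTS M p (.box a (disjL l)) := by
      intro p' hp'
      rw [satMTS_disjL]
      refine ⟨f p', ?_, (hf p' hp').1⟩
      simp only [hl, List.mem_map, Finset.mem_toList, Set.Finite.mem_toFinset,
        Set.mem_setOf_eq]
      exact ⟨p', hp', rfl⟩
    have := hR _ hsat q' hmay
    rw [satMTS_disjL] at this
    obtain ⟨φ, hφ, hsq⟩ := this
    simp only [hl, List.mem_map, Finset.mem_toList, Set.Finite.mem_toFinset,
      Set.mem_setOf_eq] at hφ
    obtain ⟨p', hp', rfl⟩ := hφ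
    exact (hf p' hp').2 hsq
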